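/- The simplicial complex ε({v,v_1}, {v,w_1}, ..., {v,w_j}; V), where v, v_1, w_1, ..., w_j are distinct elements of V = {v, v_1, w_1, ..., w_j}, is homeomorphic to (has the reduced homology of) a (j−1)-dimensional sphere. -/

import Mathlib

open Finset

/-- An abstract simplicial complex on ambient vertex type `U`:
a downward-closed set of finite subsets of `U`. -/
structure SComplex (U : Type*) where
  faces : Set (Finset U)
  down_closed : ∀ {s t : Finset U}, s ∈ faces → t ⊆ s → t ∈ faces

namespace SComplex

/-- An auxiliary (arbitrary) linear order on any type, used to fix orientations. -/
noncomputable def auxOrder (U : Type*) : LinearOrder U :=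
  letI : DecidableRel (WellOrderingRel (α := U)) := fun _ _ => Classical.propDecidable _
  linearOrderOfSTO WellOrderingRel

/-- The simplicial boundary operator on formal `K`-linear combinations of finite
subsets of `U` (a finite set of cardinality `n+1` is regarded as an `n`-simplex). -/
noncomputable def bdry (K U : Type*) [Field K] : (Finset U →₀ K) →ₗ[K] (Finset U →₀ K) :=
  letI := Classical.decEq U
  letI := auxOrder U
  Finsupp.lsum K fun s => LinearMap.toSpanSingleton K _
    (∑ v ∈ s, ((-1 : K) ^ ({w ∈ s | w < v}).card) • Finsupp.single (s.erase v) (1 : K))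

/-- The space of simplicial `n`-chains of a complex (with `n : ℤ`; the empty face is a
`(-1)`-chain, so that the associated homology is *reduced* homology). -/
noncomputable def chains (K : Type*) [Field K] {U : Type*} (Δ : SComplex U) (n : ℤ) :
    Submodule K (Finset U →₀ K) :=
  Submodule.span K {f | ∃ s ∈ Δ.faces, (s.card : ℤ) = n + 1 ∧ f = Finsupp.single s (1 : K)}

/-- The dimension over `K` of the `n`-th reduced simplicial homology of `Δ`
with coefficients in the field `K`. -/
noncomputable def rhd (K : Type*) [Field K] {U : Type*} (Δ : SComplex U) (n : ℤ) : ℕ :=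
  Module.finrank K ↥(Δ.chains K n ⊓ LinearMap.ker (bdry K U))
    - Module.finrank K ↥((Δ.chains K (n + 1)).map (bdry K U))

/-- The restriction (induced subcomplex) of `Δ` to a subset `W` of its vertices. -/
def restrict {U : Type*} (Δ : SComplex U) (W : Finset U) : SComplex U where
  faces := {s | s ∈ Δ.faces ∧ s ⊆ W}
  down_closed := fun hs hts => ⟨Δ.down_closed hs.1 hts, hts.trans hs.2⟩

/-- The vertex set of a complex, as a `Finset`. -/
noncomputable def vertexFinset {U : Type*} [Fintype U] (Δ : SComplex U) : Finset U :=
  (Set.toFinite {u : U | {u} ∈ Δ.faces}).toFinset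

/-- The graded Betti numbers `β_{i,d}` of the Stanley-Reisner ring `K[Δ]` over the
polynomial ring on the vertices of `Δ`, given by Hochster's formula, with the
conventions `β_{0,d} = δ_{d,0}` and `β_{i,d} = 0` for `i < 0` or `d < 0`. -/
noncomputable def betti (K : Type*) [Field K] {U : Type*} [Fintype U] (Δ : SComplex U)
    (i d : ℤ) : ℕ :=
  if d < 0 then 0 else
    ∑ W ∈ Δ.vertexFinset.powersetCard d.toNat, rhd K (Δ.restrict W) (d - i - 1)

/-- The total Betti numbers `β_i = Σ_d β_{i,d}`. -/
noncomputable def totalBetti (K : Type*) [Field K] {U : Type*} [Fintype U] (Δ : SComplex U)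
    (i : ℤ) : ℕ :=
  ∑ d ∈ Finset.range (Fintype.card U + 1), betti K Δ i (d : ℤ)

/-- The projective dimension of the Stanley-Reisner ring `K[Δ]` over the polynomial ring
on the vertices of `Δ`: the largest `i` with `β_i(Δ) ≠ 0`. -/
noncomputable def pd (K : Type*) [Field K] {U : Type*} [Fintype U] (Δ : SComplex U) : ℕ :=
  sSup {i : ℕ | totalBetti K Δ (i : ℤ) ≠ 0}

/-- The join of two simplicial complexes. -/
def join {U : Type*} [DecidableEq U] (Δ₁ Δ₂ : SComplex U) : SComplex U where
  faces := {s | ∃ t ∈ Δ₁.faces, ∃ u ∈ Δ₂.faces, s = t ∪ u}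
  down_closed := by
    rintro s s' ⟨t, ht, u, hu, rfl⟩ hsub
    refine ⟨s' ∩ t, Δ₁.down_closed ht inter_subset_right,
      s' ∩ u, Δ₂.down_closed hu inter_subset_right, ?_⟩
    ext x
    simp only [Finset.mem_union, Finset.mem_inter]
    constructor
    · intro hx
      rcases Finset.mem_union.1 (hsub hx) with h | h
      · exact Or.inl ⟨hx, h⟩
      · exact Or.inr ⟨hx, h⟩
    · rintro (⟨h, -⟩ | ⟨h, -⟩) <;> exact h

/-- The intersection of two simplicial complexes. -/
def inter {U : Type*} (Δ₁ Δ₂ : SComplex U) : SComplex U where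
  faces := Δ₁.faces ∩ Δ₂.faces
  down_closed := fun hs hts => ⟨Δ₁.down_closed hs.1 hts, Δ₂.down_closed hs.2 hts⟩

/-- The Alexander dual `Δ* = {F ⊆ V(Δ) | V(Δ) \ F ∉ Δ}` of a simplicial complex. -/
def dual {U : Type*} [Fintype U] [DecidableEq U] (Δ : SComplex U) : SComplex U where
  faces := {F | F ⊆ Δ.vertexFinset ∧ Δ.vertexFinset \ F ∉ Δ.faces}
  down_closed := fun {s t} hs hts =>
    ⟨hts.trans hs.1, fun h => hs.2 (Δ.down_closed h (sdiff_subset_sdiff (le_refl _) hts))⟩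

/-- The link of a face `F` in a simplicial complex. -/
def link {U : Type*} [DecidableEq U] (Δ : SComplex U) (F : Finset U) : SComplex U where
  faces := {s | s ∪ F ∈ Δ.faces ∧ Disjoint s F}
  down_closed := fun {s t} hs hts =>
    ⟨Δ.down_closed hs.1 (Finset.union_subset_union_left hts), hs.2.mono_left hts⟩

/-- The simplicial complex `ε(a₁, …, aₛ; V)` whose maximal faces are the sets
`V \ aᵢ` (for a family `a : ι → Finset U` of subsets of a finite set `V`). -/
def eps {U : Type*} {ι : Type*} [DecidableEq U] (a : ι → Finset U) (V : Finset U) :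
    SComplex U where
  faces := {s | ∃ i, s ⊆ V \ a i}
  down_closed := fun {s t} hs hts => hs.imp fun _ hi => hts.trans hi

end SComplex

open SComplex

/-- The independence complex `Δ(G)` of a simple graph: faces are the independent sets. -/
def indepComplex {V : Type*} (G : SimpleGraph V) : SComplex V where
  faces := {s | ∀ u ∈ s, ∀ w ∈ s, ¬ G.Adj u w}
  down_closed := fun hs hts u hu w hw => hs u (hts hu) w (hts hw)

/-- The graded Betti numbers `β^K_{i,d}(G)` of `K[V(G)]/I(G)`, where `I(G)` is the
edge ideal of `G`. -/
noncomputable def bettiG (K : Type*) [Field K] {V : Type*} [Fintype V] (G : SimpleGraph V)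
    (i d : ℤ) : ℕ :=
  betti K (indepComplex G) i d

/-- The total Betti numbers `β^K_i(G) = Σ_d β^K_{i,d}(G)` of the edge ideal quotient. -/
noncomputable def totalBettiG (K : Type*) [Field K] {V : Type*} [Fintype V] (G : SimpleGraph V)
    (i : ℤ) : ℕ :=
  totalBetti K (indepComplex G) i

/-- The projective dimension `pd^K(G)` of `K[V(G)]/I(G)` over `K[V(G)]`. -/
noncomputable def pdG (K : Type*) [Field K] {V : Type*} [Fintype V] (G : SimpleGraph V) : ℕ :=
  pd K (indepComplex G)



namespace EpsSphereAux
open SComplex Finset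

section
variable (K : Type*) [Field K] {U : Type*} [DecidableEq U] [LinearOrder U]

def sgn (s : Finset U) (v : U) : K := (-1 : K) ^ ({w ∈ s | w < v}).card

noncomputable def bdry' : (Finset U →₀ K) →ₗ[K] (Finset U →₀ K) :=
  Finsupp.lsum K fun s => LinearMap.toSpanSingleton K _
    (∑ v ∈ s, sgn K s v • Finsupp.single (s.erase v) (1 : K))

noncomputable def hmt (x : U) : (Finset U →₀ K) →ₗ[K] (Finset U →₀ K) :=
  Finsupp.lsum K fun s => LinearMap.toSpanSingleton K _
    (if x ∈ s then 0 else sgn K (insert x s) x • Finsupp.single (insert x s) (1 : K))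

lemma bdry'_single (s : Finset U) (a : K) :
    bdry' K (Finsupp.single s a) = a • ∑ v ∈ s, sgn K s v • Finsupp.single (s.erase v) (1 : K) := by
  simp [bdry', LinearMap.toSpanSingleton_apply]

lemma hmt_single (x : U) (s : Finset U) (a : K) :
    hmt K x (Finsupp.single s a)
      = a • if x ∈ s then 0 else sgn K (insert x s) x • Finsupp.single (insert x s) (1 : K) := by
  simp [hmt, LinearMap.toSpanSingleton_apply]


lemma sgn_sq (s : Finset U) (v : U) : sgn K s v * sgn K s v = 1 := by
  rw [sgn, ← pow_add, ← two_mul, pow_mul]; norm_num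

lemma sgn_ne_zero (s : Finset U) (v : U) : sgn K s v ≠ 0 := by
  intro h
  have := sgn_sq K s v
  rw [h, mul_zero] at this
  exact zero_ne_one this

lemma card_filter_insert {x : U} {s : Finset U} (hx : x ∉ s) (v : U) :
    ({w ∈ insert x s | w < v}).card
      = ({w ∈ s | w < v}).card + if x < v then 1 else 0 := by
  rw [filter_insert]
  split
  · rw [card_insert_of_notMem (fun h => hx (mem_filter.1 h).1)]
  · simp

lemma card_filter_erase {v : U} {s : Finset U} (hv : v ∈ s) (u : U) :
    ({w ∈ s | w < u}).card
      = ({w ∈ s.erase v | w < u}).card + if v < u then 1 else 0 := by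
  rw [filter_erase]
  by_cases h : v < u
  · rw [if_pos h]
    have hm : v ∈ filter (fun w => w < u) s := mem_filter.2 ⟨hv, h⟩
    rw [card_erase_add_one hm]
  · rw [if_neg h, add_zero]
    have hm : v ∉ filter (fun w => w < u) s := fun hm => h (mem_filter.1 hm).2
    rw [erase_eq_of_notMem hm]

lemma key1 {x v : U} {s : Finset U} (hx : x ∉ s) (hv : v ∈ s) :
    sgn K (insert x s) x * sgn K (insert x s) v
      + sgn K s v * sgn K (insert x (s.erase v)) x = 0 := by
  have hxv : x ≠ v := fun h => hx (h ▸ hv)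
  have hxe : x ∉ s.erase v := fun h => hx (mem_of_mem_erase h)
  simp only [sgn]
  rw [card_filter_insert hx x, card_filter_insert hx v, card_filter_insert hxe x]
  rw [card_filter_erase hv x]
  rcases hxv.lt_or_gt with h | h
  all_goals simp only [h, asymm h, lt_irrefl, if_true, if_false, ite_true, ite_false,
    add_zero, pow_add, pow_succ, pow_zero, mul_one]
  all_goals ring

lemma key2 {u v : U} {s : Finset U} (hv : v ∈ s) (hu : u ∈ s) (huv : u ≠ v) :
    sgn K s v * sgn K (s.erase v) u + sgn K s u * sgn K (s.erase u) v = 0 := by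
  simp only [sgn]
  rw [card_filter_erase hv u, card_filter_erase hu v]
  rcases huv.lt_or_gt with h | h
  all_goals simp only [h, asymm h, if_true, if_false, ite_true, ite_false,
    add_zero, pow_add, pow_succ, pow_zero, mul_one]
  all_goals ring



lemma homotopy_single (x : U) (s : Finset U) (a : K) :
    bdry' K (hmt K x (Finsupp.single s a)) + hmt K x (bdry' K (Finsupp.single s a))
      = Finsupp.single s a := by
  by_cases hx : x ∈ s
  · rw [hmt_single, if_pos hx, smul_zero, map_zero, zero_add, bdry'_single, map_smul,
      map_sum]
    have : ∀ v ∈ s, hmt K x (sgn K s v • Finsupp.single (s.erase v) (1 : K))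
        = if v = x then Finsupp.single s (1 : K) else 0 := by
      intro v hv
      rw [map_smul, hmt_single]
      by_cases hvx : v = x
      · subst hvx
        rw [if_neg (notMem_erase v s), if_pos rfl, smul_smul, smul_smul, mul_one,
          Finset.insert_erase hx, sgn_sq, one_smul]
      · rw [if_pos (Finset.mem_erase.2 ⟨Ne.symm hvx, hx⟩), if_neg hvx, smul_zero, smul_zero]
    rw [Finset.sum_congr rfl this, Finset.sum_ite_eq' s x (fun _ => Finsupp.single s (1 : K)),
      if_pos hx, Finsupp.smul_single, smul_eq_mul, mul_one]
  · rw [hmt_single, if_neg hx, map_smul, map_smul, bdry'_single, bdry'_single, map_smul,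
      map_sum]
    rw [Finset.sum_insert hx, Finset.erase_insert hx]
    simp only [one_mul, one_smul, smul_add, Finset.smul_sum, smul_smul, sgn_sq, mul_one]
    have hS : ∑ v ∈ s, ((a * (sgn K (insert x s) x * sgn K (insert x s) v)) •
          Finsupp.single ((insert x s).erase v) (1:K))
        + ∑ v ∈ s, a • hmt K x (sgn K s v • Finsupp.single (s.erase v) (1:K)) = 0 := by
      rw [← Finset.sum_add_distrib]
      refine Finset.sum_eq_zero fun v hv => ?_
      have hxv : x ≠ v := fun h => hx (h ▸ hv)
      have hxe : x ∉ s.erase v := fun h => hx (Finset.mem_of_mem_erase h)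
      rw [Finset.erase_insert_of_ne hxv, map_smul, hmt_single]
      rw [if_neg hxe]
      simp only [one_smul, smul_smul, mul_one]
      rw [← add_smul, ← mul_add, one_mul,
        show sgn K (insert x s) x * sgn K (insert x s) v
            + sgn K s v * sgn K (insert x (s.erase v)) x = 0 from key1 K hx hv]
      simp
    rw [add_assoc, hS, add_zero, Finsupp.smul_single, smul_eq_mul, mul_one]

lemma bdry'_bdry'_single (s : Finset U) (a : K) :
    bdry' K (bdry' K (Finsupp.single s a)) = 0 := by
  classical
  rw [bdry'_single, map_smul, map_sum]
  have hterm : ∀ v ∈ s, bdry' K (sgn K s v • Finsupp.single (s.erase v) (1:K))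
      = ∑ u ∈ s.erase v, (sgn K s v * sgn K (s.erase v) u) •
          Finsupp.single ((s.erase v).erase u) (1:K) := by
    intro v hv
    rw [map_smul, bdry'_single, one_smul, Finset.smul_sum]
    exact Finset.sum_congr rfl fun u hu => by rw [smul_smul]
  rw [Finset.sum_congr rfl hterm]
  set G : U × U → (Finset U →₀ K) := fun p =>
    if p.2 = p.1 then 0 else
      (sgn K s p.1 * sgn K (s.erase p.1) p.2) • Finsupp.single ((s.erase p.1).erase p.2) (1 : K)
    with hG
  have hstep : ∀ v ∈ s, (∑ u ∈ s.erase v, (sgn K s v * sgn K (s.erase v) u) •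
        Finsupp.single ((s.erase v).erase u) (1:K)) = ∑ u ∈ s, G (v, u) := by
    intro v hv
    have e1 : (∑ u ∈ s.erase v, (sgn K s v * sgn K (s.erase v) u) •
          Finsupp.single ((s.erase v).erase u) (1:K)) = ∑ u ∈ s.erase v, G (v, u) :=
      Finset.sum_congr rfl fun u hu => by simp [hG, (Finset.mem_erase.1 hu).1]
    rw [e1]
    exact Finset.sum_erase s (by simp [hG])
  rw [Finset.sum_congr rfl hstep,
    ← Finset.sum_product' (s := s) (t := s) (f := fun v u => G (v, u))]
  rw [Finset.sum_involution (fun p _ => (p.2, p.1))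
    (fun p hp => ?_) (fun p _ hp hswap => ?_) (fun p hp => ?_) (fun p _ => rfl), smul_zero]
  · rcases Finset.mem_product.1 hp with ⟨h1, h2⟩
    by_cases hd : p.2 = p.1
    · simp [hG, hd]
    · have h' : ¬ p.1 = p.2 := fun h => hd h.symm
      simp only [hG, if_neg hd, if_neg h']
      rw [Finset.erase_right_comm, ← add_smul,
        key2 K h1 h2 hd, zero_smul]
  · apply hp
    have : p.2 = p.1 := congrArg Prod.fst hswap
    simp [hG, this]
  · rcases Finset.mem_product.1 hp with ⟨h1, h2⟩
    exact Finset.mem_product.2 ⟨h2, h1⟩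


lemma homotopy (x : U) (f : Finset U →₀ K) :
    bdry' K (hmt K x f) + hmt K x (bdry' K f) = f := by
  have h : (bdry' K (U := U) ∘ₗ hmt K x + hmt K x ∘ₗ bdry' K) = LinearMap.id := by
    apply Finsupp.lhom_ext
    intro s a
    simpa using homotopy_single K x s a
  simpa using LinearMap.congr_fun h f

lemma main_calc (S : Finset U) (x : U) (hxS : x ∈ S) (Δ : SComplex U)
    (hfaces : Δ.faces = {s : Finset U | s ⊆ S ∧ s ≠ S}) (n : ℤ) :
    Module.finrank K ↥(Δ.chains K n ⊓ LinearMap.ker (bdry' K))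
      - Module.finrank K ↥((Δ.chains K (n + 1)).map (bdry' K))
      = if n = (S.card : ℤ) - 2 then 1 else 0 := by
  have hc1 : 1 ≤ S.card := Finset.card_pos.2 ⟨x, hxS⟩
  have hbot : ∀ m : ℤ, (m + 1 < 0 ∨ (S.card : ℤ) ≤ m + 1) → Δ.chains K m = ⊥ := by
    intro m hm
    have hempty : {f : Finset U →₀ K |
        ∃ s ∈ Δ.faces, (s.card : ℤ) = m + 1 ∧ f = Finsupp.single s (1:K)} = ∅ := by
      ext f
      simp only [Set.mem_setOf_eq, Set.mem_empty_iff_false, iff_false, not_exists]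
      intro s hs
      obtain ⟨hs1, hcard, -⟩ := hs
      rw [hfaces] at hs1
      have hlt : s.card < S.card :=
        Finset.card_lt_card (HasSubset.Subset.ssubset_of_ne hs1.1 hs1.2)
      omega
    rw [SComplex.chains, hempty, Submodule.span_empty]
  have hfd : ∀ m : ℤ, FiniteDimensional K ↥(Δ.chains K m) := by
    intro m
    rw [SComplex.chains]
    apply FiniteDimensional.span_of_finite
    refine Set.Finite.subset ((S.powerset.finite_toSet).image fun s => Finsupp.single s (1:K)) ?_
    rintro f ⟨s, hs, -, rfl⟩
    refine ⟨s, ?_, rfl⟩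
    rw [hfaces] at hs
    simpa [Finset.mem_powerset] using hs.1
  have hker : ∀ m : ℤ, m ≤ (S.card:ℤ) - 3 →
      Δ.chains K m ⊓ LinearMap.ker (bdry' K) ≤ (Δ.chains K (m+1)).map (bdry' K) := by
    intro m hm z hz
    obtain ⟨hzc, hzk⟩ := hz
    have hhz : hmt K x z ∈ Δ.chains K (m+1) := by
      have h2 : (Δ.chains K m).map (hmt K x) ≤ Δ.chains K (m+1) := by
        rw [SComplex.chains, Submodule.map_span_le]
        rintro f ⟨s, hs, hcard, rfl⟩
        rw [hmt_single, one_smul]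
        by_cases hxs : x ∈ s
        · rw [if_pos hxs]; exact Submodule.zero_mem _
        · rw [if_neg hxs]
          apply Submodule.smul_mem
          apply Submodule.subset_span
          refine ⟨insert x s, ?_, ?_, rfl⟩
          · rw [hfaces]
            have hsub : s ⊆ S := by rw [hfaces] at hs; exact hs.1
            refine ⟨Finset.insert_subset hxS hsub, ?_⟩
            intro hSS
            have h3 : (insert x s).card = s.card + 1 := Finset.card_insert_of_notMem hxs
            have h4 := congrArg Finset.card hSS
            omega
          · rw [Finset.card_insert_of_notMem hxs]; push_cast; omega
      exact h2 ⟨z, hzc, rfl⟩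
    have hz' := homotopy K x z
    rw [LinearMap.mem_ker.1 hzk, map_zero, add_zero] at hz'
    exact ⟨hmt K x z, hhz, hz'⟩
  rcases lt_trichotomy n ((S.card:ℤ) - 2) with hn | hn | hn
  · rw [if_neg hn.ne]
    rcases le_or_gt (-1 : ℤ) n with h1 | h1
    · haveI := hfd (n+1)
      exact Nat.sub_eq_zero_of_le (Submodule.finrank_mono (hker n (by omega)))
    · rw [hbot n (Or.inl (by omega)), bot_inf_eq, finrank_bot, Nat.zero_sub]
  · rw [if_pos hn]
    have htop : Δ.chains K (n+1) = ⊥ := hbot (n+1) (Or.inr (by omega))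
    rw [htop, Submodule.map_bot]
    set z₀ : Finset U →₀ K := bdry' K (Finsupp.single S (1:K)) with hz₀
    have hspan : Δ.chains K n ⊓ LinearMap.ker (bdry' K) = Submodule.span K {z₀} := by
      apply le_antisymm
      · rintro z ⟨hzc, hzk⟩
        have hhz : hmt K x z ∈ Submodule.span K {Finsupp.single S (1:K)} := by
          have h2 : (Δ.chains K n).map (hmt K x)
              ≤ Submodule.span K {Finsupp.single S (1:K)} := by
            rw [SComplex.chains, Submodule.map_span_le]
            rintro f ⟨s, hs, hcard, rfl⟩
            rw [hmt_single, one_smul]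
            by_cases hxs : x ∈ s
            · rw [if_pos hxs]; exact Submodule.zero_mem _
            · rw [if_neg hxs]
              have hsub : s ⊆ S := by rw [hfaces] at hs; exact hs.1
              have hins : insert x s = S := by
                apply Finset.eq_of_subset_of_card_le (Finset.insert_subset hxS hsub)
                rw [Finset.card_insert_of_notMem hxs]
                omega
              rw [hins]
              exact Submodule.smul_mem _ _ (Submodule.subset_span rfl)
          exact h2 ⟨z, hzc, rfl⟩
        have hz' := homotopy K x z
        rw [LinearMap.mem_ker.1 hzk, map_zero, add_zero] at hz'
        rw [← hz']
        have hm : bdry' K (hmt K x z)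
            ∈ (Submodule.span K {Finsupp.single S (1:K)}).map (bdry' K) := ⟨_, hhz, rfl⟩
        rwa [Submodule.map_span, Set.image_singleton] at hm
      · rw [Submodule.span_le, Set.singleton_subset_iff]
        refine Submodule.mem_inf.2 ⟨?_, ?_⟩
        · rw [hz₀, bdry'_single, one_smul, SComplex.chains]
          apply Submodule.sum_mem
          intro u hu
          apply Submodule.smul_mem
          apply Submodule.subset_span
          refine ⟨S.erase u, ?_, ?_, rfl⟩
          · rw [hfaces]
            exact ⟨Finset.erase_subset _ _, fun h => (Finset.erase_eq_self.1 h) hu⟩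
          · rw [Finset.card_erase_of_mem hu]
            omega
        · exact LinearMap.mem_ker.2 (bdry'_bdry'_single K S 1)
    rw [hspan]
    have hz0ne : z₀ ≠ 0 := by
      intro h0
      have happ := congrArg (fun f : Finset U →₀ K => f (S.erase x)) h0
      simp only [Finsupp.coe_zero, Pi.zero_apply] at happ
      rw [hz₀, bdry'_single, one_smul, Finsupp.finset_sum_apply,
        Finset.sum_eq_single_of_mem x hxS ?_] at happ
      · rw [Finsupp.smul_apply, Finsupp.single_eq_same, smul_eq_mul, mul_one] at happ
        exact sgn_ne_zero K S x happ
      · intro u hu hux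
        have hne : S.erase u ≠ S.erase x := by
          intro he
          have hxm : x ∈ S.erase u := Finset.mem_erase.2 ⟨Ne.symm hux, hxS⟩
          rw [he] at hxm
          exact Finset.notMem_erase x S hxm
        rw [Finsupp.smul_apply, Finsupp.single_eq_of_ne' hne, smul_zero]
    rw [finrank_span_singleton hz0ne, finrank_bot]
  · rw [if_neg hn.ne']
    rw [hbot n (Or.inr (by omega)), bot_inf_eq, finrank_bot, Nat.zero_sub]

end

lemma bdry_eq (K : Type*) [Field K] (U : Type*) [inst : DecidableEq U] :
    bdry K U = @bdry' K _ U inst (auxOrder U) := by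
  rw [Subsingleton.elim inst (Classical.decEq U)]
  rfl

end EpsSphereAux

/-- The complex `ε({v,v₁}, {v,w₁}, …, {v,w_j}; V)` on
`V = {v, v₁, w₁, …, w_j}` (all distinct) has the reduced homology of a `(j-1)`-sphere:
its reduced homology is `1`-dimensional in degree `j - 1` and zero elsewhere. -/
theorem eps_sphere {U : Type*} [DecidableEq U] (K : Type*) [Field K] {j : ℕ}
    (v v₁ : U) (w : Fin j → U) (hw : Function.Injective w)
    (hvv₁ : v ≠ v₁) (hwv : ∀ i, w i ≠ v) (hwv₁ : ∀ i, w i ≠ v₁) :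
    ∀ n : ℤ,
      rhd K
        (eps (Fin.cons {v, v₁} (fun i : Fin j => ({v, w i} : Finset U)) :
            Fin (j + 1) → Finset U)
          (insert v (insert v₁ (Finset.image w Finset.univ)))) n
        = if n = (j : ℤ) - 1 then 1 else 0 := by
  intro n
  set S : Finset U := insert v₁ (Finset.image w Finset.univ) with hSdef
  have hv₁S : v₁ ∈ S := Finset.mem_insert_self _ _
  have hvS : v ∉ S := by
    simp only [hSdef, Finset.mem_insert, Finset.mem_image, Finset.mem_univ, true_and,
      not_or, not_exists]
    exact ⟨hvv₁, fun i h => hwv i h⟩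
  have hv₁w : v₁ ∉ Finset.image w Finset.univ := by
    simp only [Finset.mem_image, Finset.mem_univ, true_and, not_exists]
    exact fun i h => hwv₁ i h
  have hScard : S.card = j + 1 := by
    rw [hSdef, Finset.card_insert_of_notMem hv₁w,
      Finset.card_image_of_injective _ hw, Finset.card_univ, Fintype.card_fin]
  set a : Fin (j+1) → Finset U := Fin.cons {v, v₁} (fun i : Fin j => ({v, w i} : Finset U))
    with hadef
  set V : Finset U := insert v S with hVdef
  have hfaces : (SComplex.eps a V).faces = {s : Finset U | s ⊆ S ∧ s ≠ S} := by
    ext s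
    show (∃ i, s ⊆ V \ a i) ↔ (s ⊆ S ∧ s ≠ S)
    constructor
    · rintro ⟨i, hi⟩
      have hvai : v ∈ a i := by
        refine Fin.cases ?_ ?_ i
        · rw [hadef, Fin.cons_zero]; exact Finset.mem_insert_self _ _
        · intro k; rw [hadef, Fin.cons_succ]; exact Finset.mem_insert_self _ _
      have hsubS : s ⊆ S := by
        intro z hz
        have hz2 := hi hz
        rw [Finset.mem_sdiff] at hz2
        rcases Finset.mem_insert.1 hz2.1 with h | h
        · exact absurd (h ▸ hvai) hz2.2
        · exact h
      refine ⟨hsubS, ?_⟩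
      revert hi
      refine Fin.cases ?_ ?_ i
      · intro hi hEq
        have hv₁s : v₁ ∈ s := hEq ▸ hv₁S
        have h2 := hi hv₁s
        rw [Finset.mem_sdiff, hadef, Fin.cons_zero] at h2
        exact h2.2 (Finset.mem_insert_of_mem (Finset.mem_singleton_self _))
      · intro k hi hEq
        have hwk : w k ∈ S := by
          rw [hSdef]
          exact Finset.mem_insert_of_mem (Finset.mem_image_of_mem w (Finset.mem_univ k))
        have hwks : w k ∈ s := hEq ▸ hwk
        have h2 := hi hwks
        rw [Finset.mem_sdiff, hadef, Fin.cons_succ] at h2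
        exact h2.2 (Finset.mem_insert_of_mem (Finset.mem_singleton_self _))
    · rintro ⟨hsub, hne⟩
      obtain ⟨y, hyS, hys⟩ := Finset.exists_of_ssubset (HasSubset.Subset.ssubset_of_ne hsub hne)
      have hsv : ∀ z ∈ s, z ≠ v := fun z hz h => hvS (h ▸ hsub hz)
      rw [hSdef] at hyS
      rcases Finset.mem_insert.1 hyS with rfl | hy
      · refine ⟨0, fun z hz => ?_⟩
        rw [hadef, Fin.cons_zero, Finset.mem_sdiff]
        refine ⟨Finset.mem_insert_of_mem (hsub hz), ?_⟩
        simp only [Finset.mem_insert, Finset.mem_singleton, not_or]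
        exact ⟨hsv z hz, fun h => hys (h ▸ hz)⟩
      · obtain ⟨k, -, rfl⟩ := Finset.mem_image.1 hy
        refine ⟨k.succ, fun z hz => ?_⟩
        rw [hadef, Fin.cons_succ, Finset.mem_sdiff]
        refine ⟨Finset.mem_insert_of_mem (hsub hz), ?_⟩
        simp only [Finset.mem_insert, Finset.mem_singleton, not_or]
        exact ⟨hsv z hz, fun h => hys (h ▸ hz)⟩
  rw [SComplex.rhd, EpsSphereAux.bdry_eq K U]
  rw [@EpsSphereAux.main_calc K _ U _ (SComplex.auxOrder U) S v₁ hv₁S _ hfaces n]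
  have hcast : (S.card : ℤ) - 2 = (j : ℤ) - 1 := by rw [hScard]; push_cast; ring
  rw [hcast]
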